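/- arXiv:1102.4639 — 2 statements merged into one kernel-verified Lean document; each statement's English description precedes it below -/
import Mathlib

section
/- One step of the Approximate-Centrality update preserves the invariant: if c̃r = cr(s - r), and we update c̃r' = c̃r + r(u)·e_u and r' = r - r(u)·e_u + α·r(u)·e_u·A (for any vertex u), then c̃r' = cr(s - r'). -/
open Matrix

/-- one step of Approximate-Centrality preserves the invariant
c̃r = cr(s - r). -/
theorem approximate_centrality_loop_invariant
    (n : ℕ) (A : Matrix (Fin n) (Fin n) ℝ) (α : ℝ)
    (hρ : ENNReal.ofReal |α| * spectralRadius ℝ A < 1)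
    (cr : (Fin n → ℝ) → (Fin n → ℝ))
    (hcr : ∀ x, cr x = x ᵥ* ((1 : Matrix (Fin n) (Fin n) ℝ) - α • A)⁻¹)
    (s r tcr : Fin n → ℝ) (u : Fin n)
    (eu : Fin n → ℝ) (heu : eu = Pi.single u (1 : ℝ))
    (hinv : tcr = cr (s - r))
    (tcr' r' : Fin n → ℝ)
    (htcr' : tcr' = tcr + r u • eu)
    (hr' : r' = r - r u • eu + α • ((r u • eu) ᵥ* A)) :
    tcr' = cr (s - r') := by
  set B : Matrix (Fin n) (Fin n) ℝ := (1 : Matrix (Fin n) (Fin n) ℝ) - α • A with hB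
  -- B is invertible
  have hunit : IsUnit B := by
    by_cases hα : α = 0
    · simp [hB, hα]
    · by_contra h
      have hmem : α⁻¹ ∈ spectrum ℝ A := by
        rw [spectrum.mem_iff]
        intro hu
        apply h
        have : B = (α • (1 : Matrix (Fin n) (Fin n) ℝ)) *
            (algebraMap ℝ (Matrix (Fin n) (Fin n) ℝ) α⁻¹ - A) := by
          rw [Algebra.algebraMap_eq_smul_one]
          rw [smul_mul_assoc, mul_sub, one_mul, smul_sub, smul_smul,
            mul_inv_cancel₀ hα, one_smul, hB, one_mul]
        rw [this]
        exact ((Algebra.algebraMap_eq_smul_one (R := ℝ)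
          (A := Matrix (Fin n) (Fin n) ℝ) α ▸
          (isUnit_iff_ne_zero.mpr hα).map
            (algebraMap ℝ (Matrix (Fin n) (Fin n) ℝ)))).mul hu
      have hle : (‖α⁻¹‖₊ : ENNReal) ≤ spectralRadius ℝ A :=
        le_iSup₂ (f := fun (k : ℝ) (_ : k ∈ spectrum ℝ A) => (‖k‖₊ : ENNReal))
          α⁻¹ hmem
      have h1 : (1 : ENNReal) ≤ ENNReal.ofReal |α| * spectralRadius ℝ A := by
        calc (1 : ENNReal) = ENNReal.ofReal |α| * (‖α⁻¹‖₊ : ENNReal) := by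
              have habs : |α|.toNNReal = ‖α‖₊ := by
                ext; simp [Real.coe_toNNReal _ (abs_nonneg α), Real.norm_eq_abs]
              rw [ENNReal.ofReal, habs, ← ENNReal.coe_mul, ← nnnorm_mul,
                mul_inv_cancel₀ hα, nnnorm_one, ENNReal.coe_one]
          _ ≤ ENNReal.ofReal |α| * spectralRadius ℝ A :=
              mul_le_mul_right hle _
      exact absurd (lt_of_le_of_lt h1 hρ) (lt_irrefl 1)
  have hBB : B⁻¹ * B = 1 := nonsing_inv_mul B (isUnit_iff_isUnit_det B |>.mp hunit)
  have hBB' : B * B⁻¹ = 1 := mul_nonsing_inv B (isUnit_iff_isUnit_det B |>.mp hunit)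
  -- key computation
  have key : tcr' ᵥ* B = s - r' := by
    have htcrB : tcr ᵥ* B = s - r := by
      rw [hinv, hcr, vecMul_vecMul, hBB, vecMul_one]
    have heuB : (r u • eu) ᵥ* B = r u • eu - α • ((r u • eu) ᵥ* A) := by
      have hsmul : (r u • eu) ᵥ* (α • A) = α • ((r u • eu) ᵥ* A) := by
        ext i
        simp [Matrix.vecMul, dotProduct, Finset.mul_sum, mul_left_comm]
      rw [hB, vecMul_sub, vecMul_one, hsmul]
    rw [htcr', add_vecMul, htcrB, heuB, hr']
    abel
  rw [hcr]
  calc tcr' = tcr' ᵥ* (B * B⁻¹) := by rw [hBB', vecMul_one]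
    _ = (s - r') ᵥ* B⁻¹ := by rw [← vecMul_vecMul, key]
end

section
/- Error bound from residual: if c̃r = cr(s) - cr(r) where A is entrywise nonnegative, 0 ≤ α with α·ρ(A) < 1, and the residual satisfies 0 ≤ r(u) ≤ δ·s(u) for all u with 0 < δ ≤ 1 and s entrywise positive, then for every vertex u: cr(s)(u) ≥ c̃r(u) ≥ (1-δ)·cr(s)(u). -/
open Matrix Finset Filter Topology
open scoped ENNReal NNReal

section aux
variable {n : ℕ}

lemma mulVec_apply' (B : Matrix (Fin n) (Fin n) ℝ) (x : Fin n → ℝ) (i : Fin n) :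
    (B *ᵥ x) i = ∑ j, B i j * x j := by
  simp [Matrix.mulVec, dotProduct]

lemma mulVec_entry_nonneg (B : Matrix (Fin n) (Fin n) ℝ) (hB : ∀ i j, 0 ≤ B i j)
    (x : Fin n → ℝ) (hx : ∀ i, 0 ≤ x i) (i : Fin n) : 0 ≤ (B *ᵥ x) i := by
  rw [mulVec_apply']
  exact Finset.sum_nonneg fun j _ => mul_nonneg (hB i j) (hx j)

lemma mulVec_mono (B : Matrix (Fin n) (Fin n) ℝ) (hB : ∀ i j, 0 ≤ B i j)
    (x y : Fin n → ℝ) (hxy : ∀ i, x i ≤ y i) (i : Fin n) :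
    (B *ᵥ x) i ≤ (B *ᵥ y) i := by
  rw [mulVec_apply', mulVec_apply']
  exact Finset.sum_le_sum fun j _ => mul_le_mul_of_nonneg_left (hxy j) (hB i j)

lemma continuous_mulVec (B : Matrix (Fin n) (Fin n) ℝ) :
    Continuous fun v : Fin n → ℝ => B *ᵥ v :=
  LinearMap.continuous_of_finiteDimensional (Matrix.mulVecLin B)

lemma smul_subinv (B : Matrix (Fin n) (Fin n) ℝ) (x : Fin n → ℝ) (a : ℝ) (ha : 0 ≤ a)
    (h : ∀ i, x i ≤ (B *ᵥ x) i) : ∀ i, (a • x) i ≤ (B *ᵥ (a • x)) i := by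
  intro i
  rw [Matrix.mulVec_smul, Pi.smul_apply, Pi.smul_apply, smul_eq_mul, smul_eq_mul]
  exact mul_le_mul_of_nonneg_left (h i) ha

/-- Perron-Frobenius for strictly positive matrices with a subinvariant vector. -/
lemma perron_pos (B : Matrix (Fin n) (Fin n) ℝ) (hB : ∀ i j, 0 < B i j)
    (w : Fin n → ℝ) (hw0 : ∀ i, 0 ≤ w i) (hwne : w ≠ 0)
    (hsub : ∀ i, w i ≤ (B *ᵥ w) i) :
    ∃ lam : ℝ, 1 ≤ lam ∧ ∃ v ∈ stdSimplex ℝ (Fin n), B *ᵥ v = lam • v := by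
  have hBnn : ∀ i j, 0 ≤ B i j := fun i j => (hB i j).le
  have hne : Nonempty (Fin n) := by
    by_contra h
    rw [not_nonempty_iff] at h
    exact hwne (funext fun i => absurd trivial (fun _ => h.false i))
  obtain ⟨i₀⟩ := hne
  obtain ⟨p₀, -, hp₀⟩ := Finset.exists_min_image (Finset.univ ×ˢ Finset.univ)
    (fun p : Fin n × Fin n => B p.1 p.2) ⟨(i₀, i₀), by simp⟩
  set b : ℝ := B p₀.1 p₀.2 with hbdef
  have hb : 0 < b := hB _ _
  have hble : ∀ i j, b ≤ B i j := fun i j => hp₀ (i, j) (by simp)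
  set T : ℝ := ∑ i, ∑ j, B i j with hTdef
  have hcolT : ∀ j, ∑ i, B i j ≤ T :=
    fun j => Finset.sum_le_sum fun i _ =>
      Finset.single_le_sum (fun j' (_ : j' ∈ Finset.univ) => hBnn i j') (Finset.mem_univ j)
  have hbT : b ≤ T := by
    calc b ≤ B i₀ i₀ := hble _ _
    _ ≤ ∑ i, B i i₀ := Finset.single_le_sum (fun i _ => hBnn i i₀) (Finset.mem_univ i₀)
    _ ≤ T := hcolT i₀
  have hT : 0 < T := lt_of_lt_of_le hb hbT
  have hlow : ∀ v ∈ stdSimplex ℝ (Fin n), ∀ i, b ≤ (B *ᵥ v) i := by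
    intro v hv i
    rw [mulVec_apply']
    calc b = ∑ j, b * v j := by rw [← Finset.mul_sum, hv.2, mul_one]
    _ ≤ ∑ j, B i j * v j := Finset.sum_le_sum fun j _ =>
        mul_le_mul_of_nonneg_right (hble i j) (hv.1 j)
  have hvle1 : ∀ v ∈ stdSimplex ℝ (Fin n), ∀ i, v i ≤ 1 := by
    intro v hv i
    rw [← hv.2]
    exact Finset.single_le_sum (fun j _ => hv.1 j) (Finset.mem_univ i)
  -- σ bounds
  have hσlow : ∀ v ∈ stdSimplex ℝ (Fin n), b ≤ ∑ i, (B *ᵥ v) i := by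
    intro v hv
    exact le_trans (hlow v hv i₀) (Finset.single_le_sum
      (fun i _ => le_trans hb.le (hlow v hv i)) (Finset.mem_univ i₀))
  have hσhigh : ∀ v ∈ stdSimplex ℝ (Fin n), ∑ i, (B *ᵥ v) i ≤ T := by
    intro v hv
    have : ∑ i, (B *ᵥ v) i = ∑ j, (∑ i, B i j) * v j := by
      simp_rw [mulVec_apply']
      rw [Finset.sum_comm]
      simp_rw [Finset.sum_mul]
    rw [this]
    calc ∑ j, (∑ i, B i j) * v j ≤ ∑ j, T * v j :=
        Finset.sum_le_sum fun j _ => mul_le_mul_of_nonneg_right (hcolT j) (hv.1 j)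
    _ = T := by rw [← Finset.mul_sum, hv.2, mul_one]
  set c : ℝ := b / T with hcdef
  have hc : 0 < c := div_pos hb hT
  set C : ℝ := T / c with hCdef
  set K : Set (Fin n → ℝ) := {v ∈ stdSimplex ℝ (Fin n) | ∀ i, c ≤ v i} with hKdef
  have hKsub : K ⊆ stdSimplex ℝ (Fin n) := fun v hv => hv.1
  have hKclosed : IsClosed K := by
    have h1 : IsClosed (stdSimplex ℝ (Fin n)) := (isCompact_stdSimplex ℝ _).isClosed
    have h2 : IsClosed {v : Fin n → ℝ | ∀ i, c ≤ v i} := by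
      have : {v : Fin n → ℝ | ∀ i, c ≤ v i} = ⋂ i, {v | c ≤ v i} := by ext v; simp
      rw [this]
      exact isClosed_iInter fun i => isClosed_le continuous_const (continuous_apply i)
    exact h1.inter h2
  have hKcompact : IsCompact K := (isCompact_stdSimplex ℝ _).of_isClosed_subset hKclosed hKsub
  -- normalization map lands in K
  have hg : ∀ v ∈ stdSimplex ℝ (Fin n),
      (∑ i, (B *ᵥ v) i)⁻¹ • (B *ᵥ v) ∈ K := by
    intro v hv
    have hσb := hσlow v hv
    have hσT := hσhigh v hv
    have hσpos : 0 < ∑ i, (B *ᵥ v) i := lt_of_lt_of_le hb hσb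
    refine ⟨⟨fun i => mul_nonneg (inv_nonneg.mpr hσpos.le) (le_trans hb.le (hlow v hv i)), ?_⟩, ?_⟩
    · simp only [Pi.smul_apply, smul_eq_mul, ← Finset.mul_sum]
      rw [inv_mul_cancel₀ hσpos.ne']
    · intro i
      have h1 : b ≤ (B *ᵥ v) i := hlow v hv i
      have : (1 : ℝ) / T ≤ (∑ i, (B *ᵥ v) i)⁻¹ := by
        rw [one_div]
        exact inv_anti₀ hσpos hσT
      calc c = (1 / T) * b := by rw [hcdef]; ring
      _ ≤ (∑ i, (B *ᵥ v) i)⁻¹ * (B *ᵥ v) i := by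
          apply mul_le_mul this h1 hb.le (inv_nonneg.mpr hσpos.le)
      _ = ((∑ i, (B *ᵥ v) i)⁻¹ • (B *ᵥ v)) i := rfl
  have hC : 0 < C := div_pos hT hc
  have hhigh : ∀ v ∈ stdSimplex ℝ (Fin n), ∀ i, (B *ᵥ v) i ≤ T := by
    intro v hv i
    rw [mulVec_apply']
    calc ∑ j, B i j * v j ≤ ∑ j, B i j := Finset.sum_le_sum fun j _ => by
          nlinarith [hv.1 j, hvle1 v hv j, hB i j]
    _ ≤ T := Finset.single_le_sum (fun i (_ : i ∈ Finset.univ) =>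
        Finset.sum_nonneg fun j _ => hBnn i j) (Finset.mem_univ i)
  -- claim : any subinvariance level over K is at most C
  have hclaim : ∀ (t : ℝ) (v : Fin n → ℝ), v ∈ K → (∀ i, t * v i ≤ (B *ᵥ v) i) → t ≤ C := by
    intro t v hv ht
    have h1 : t * v i₀ ≤ T := le_trans (ht i₀) (hhigh v (hKsub hv) i₀)
    rcases le_or_gt t 0 with h | h
    · exact le_trans h hC.le
    · rw [hCdef, le_div_iff₀ hc]
      calc t * c ≤ t * v i₀ := mul_le_mul_of_nonneg_left (hv.2 i₀) h.le
      _ ≤ T := h1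
  -- the compact set E of (level, vector) pairs
  set E : Set (ℝ × (Fin n → ℝ)) :=
    {p | p.2 ∈ K ∧ 1 ≤ p.1 ∧ (∀ i, p.1 * p.2 i ≤ (B *ᵥ p.2) i)} with hEdef
  have hEclosed : IsClosed E := by
    have h1 : IsClosed {p : ℝ × (Fin n → ℝ) | p.2 ∈ K} := hKclosed.preimage continuous_snd
    have h2 : IsClosed {p : ℝ × (Fin n → ℝ) | 1 ≤ p.1} :=
      isClosed_le continuous_const continuous_fst
    have h3 : IsClosed {p : ℝ × (Fin n → ℝ) | ∀ i, p.1 * p.2 i ≤ (B *ᵥ p.2) i} := by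
      have : {p : ℝ × (Fin n → ℝ) | ∀ i, p.1 * p.2 i ≤ (B *ᵥ p.2) i}
          = ⋂ i, {p : ℝ × (Fin n → ℝ) | p.1 * p.2 i ≤ (B *ᵥ p.2) i} := by ext p; simp
      rw [this]
      refine isClosed_iInter fun i => isClosed_le ?_ ?_
      · exact continuous_fst.mul ((continuous_apply i).comp continuous_snd)
      · exact (continuous_apply i).comp ((continuous_mulVec B).comp continuous_snd)
    have hE : E = {p : ℝ × (Fin n → ℝ) | p.2 ∈ K} ∩ ({p | 1 ≤ p.1} ∩ {p | ∀ i, p.1 * p.2 i ≤ (B *ᵥ p.2) i}) := by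
      ext p; simp only [hEdef, Set.mem_setOf_eq, Set.mem_inter_iff]
    rw [hE]
    exact h1.inter (h2.inter h3)
  have hEsub : E ⊆ (Set.Icc (1 : ℝ) C) ×ˢ K := by
    rintro ⟨t, v⟩ ⟨h1, h2, h3⟩
    exact ⟨⟨h2, hclaim t v h1 h3⟩, h1⟩
  have hEcompact : IsCompact E :=
    ((isCompact_Icc.prod hKcompact)).of_isClosed_subset hEclosed hEsub
  -- E is nonempty
  have hEne : E.Nonempty := by
    have hwsum : 0 < ∑ i, w i := by
      obtain ⟨i, hi⟩ : ∃ i, w i ≠ 0 := by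
        by_contra h
        push_neg at h
        exact hwne (funext h)
      have hi' : 0 < w i := lt_of_le_of_ne (hw0 i) (Ne.symm hi)
      exact lt_of_lt_of_le hi' (Finset.single_le_sum (fun j _ => hw0 j) (Finset.mem_univ i))
    set w' : Fin n → ℝ := (∑ i, w i)⁻¹ • w with hw'def
    have hw'Δ : w' ∈ stdSimplex ℝ (Fin n) := by
      refine ⟨fun i => mul_nonneg (inv_nonneg.mpr hwsum.le) (hw0 i), ?_⟩
      simp only [hw'def, Pi.smul_apply, smul_eq_mul, ← Finset.mul_sum]
      rw [inv_mul_cancel₀ hwsum.ne']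
    have hsub' : ∀ i, w' i ≤ (B *ᵥ w') i :=
      smul_subinv B w _ (inv_nonneg.mpr hwsum.le) hsub
    set v₀ : Fin n → ℝ := (∑ i, (B *ᵥ w') i)⁻¹ • (B *ᵥ w') with hv₀def
    have hv₀K : v₀ ∈ K := hg w' hw'Δ
    have hσpos : 0 < ∑ i, (B *ᵥ w') i := lt_of_lt_of_le hb (hσlow w' hw'Δ)
    have hsub₀ : ∀ i, v₀ i ≤ (B *ᵥ v₀) i :=
      smul_subinv B (B *ᵥ w') _ (inv_nonneg.mpr hσpos.le)
        (fun i => mulVec_mono B hBnn w' (B *ᵥ w') hsub' i)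
    exact ⟨(1, v₀), hv₀K, le_refl 1, fun i => by rw [one_mul]; exact hsub₀ i⟩
  -- maximize the level over E
  obtain ⟨⟨lam, vstar⟩, hmemE, hmax⟩ := hEcompact.exists_isMaxOn hEne
    (continuous_fst.continuousOn (s := E))
  obtain ⟨hvK, hlam1, hsubl⟩ := hmemE
  refine ⟨lam, hlam1, vstar, hKsub hvK, ?_⟩
  -- show the eigen equation holds
  by_contra hneq
  set z : Fin n → ℝ := B *ᵥ vstar - lam • vstar with hzdef
  have hz0 : ∀ i, 0 ≤ z i := fun i => by
    simp only [hzdef, Pi.sub_apply, Pi.smul_apply, smul_eq_mul, sub_nonneg]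
    exact hsubl i
  have hzne : z ≠ 0 := by
    intro h
    apply hneq
    have := sub_eq_zero.mp h
    exact this
  obtain ⟨j₁, hj₁⟩ : ∃ j, 0 < z j := by
    by_contra h
    push_neg at h
    exact hzne (funext fun i => le_antisymm (h i) (hz0 i))
  have hBz : ∀ i, 0 < (B *ᵥ z) i := by
    intro i
    rw [mulVec_apply']
    have : 0 < B i j₁ * z j₁ := mul_pos (hB i j₁) hj₁
    calc (0:ℝ) < B i j₁ * z j₁ := this
    _ ≤ ∑ j, B i j * z j := Finset.single_le_sum
        (f := fun j => B i j * z j) (fun j _ => mul_nonneg (hBnn i j) (hz0 j))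
        (Finset.mem_univ j₁)
  obtain ⟨i₁, -, hi₁⟩ := Finset.exists_min_image Finset.univ
    (fun i => (B *ᵥ z) i) ⟨i₀, Finset.mem_univ i₀⟩
  set m : ℝ := (B *ᵥ z) i₁ with hmdef
  have hm : 0 < m := hBz i₁
  set σ : ℝ := ∑ i, (B *ᵥ vstar) i with hσdef
  have hσb : b ≤ σ := hσlow vstar (hKsub hvK)
  have hσpos : 0 < σ := lt_of_lt_of_le hb hσb
  set v' : Fin n → ℝ := σ⁻¹ • (B *ᵥ vstar) with hv'def
  have hv'K : v' ∈ K := hg vstar (hKsub hvK)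
  set t' : ℝ := lam + m / σ with ht'def
  have ht' : ∀ i, t' * v' i ≤ (B *ᵥ v') i := by
    intro i
    have hkey : (B *ᵥ (B *ᵥ vstar)) i - lam * (B *ᵥ vstar) i = (B *ᵥ z) i := by
      rw [hzdef, Matrix.mulVec_sub, Matrix.mulVec_smul]
      simp [smul_eq_mul]
    have hmle : m ≤ (B *ᵥ z) i := hi₁ i (Finset.mem_univ i)
    have hv'le1 : v' i ≤ 1 := hvle1 v' (hKsub hv'K) i
    have hv'0 : 0 ≤ v' i := (hKsub hv'K).1 i
    have hBv' : (B *ᵥ v') i = σ⁻¹ * (B *ᵥ (B *ᵥ vstar)) i := by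
      rw [hv'def, Matrix.mulVec_smul]; rfl
    have hv'i : v' i = σ⁻¹ * (B *ᵥ vstar) i := rfl
    rw [ht'def, hBv', hv'i]
    have hmσ : 0 < m / σ := div_pos hm hσpos
    have : (lam + m / σ) * (σ⁻¹ * (B *ᵥ vstar) i)
        = lam * (σ⁻¹ * (B *ᵥ vstar) i) + (m / σ) * (σ⁻¹ * (B *ᵥ vstar) i) := by ring
    rw [this]
    have h2 : (m / σ) * (σ⁻¹ * (B *ᵥ vstar) i) ≤ m / σ := by
      nlinarith [hv'le1, hv'0, hmσ]
    have h3 : σ⁻¹ * (B *ᵥ (B *ᵥ vstar)) i = lam * (σ⁻¹ * (B *ᵥ vstar) i) + σ⁻¹ * (B *ᵥ z) i := by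
      rw [← hkey]; ring
    rw [h3]
    have h4 : m / σ ≤ σ⁻¹ * (B *ᵥ z) i := by
      rw [div_eq_inv_mul]
      exact mul_le_mul_of_nonneg_left hmle (inv_nonneg.mpr hσpos.le)
    linarith
  have ht'1 : 1 ≤ t' := le_trans hlam1 (by rw [ht'def]; nlinarith [div_pos hm hσpos])
  have ht'E : (t', v') ∈ E := ⟨hv'K, ht'1, ht'⟩
  have hle : t' ≤ lam := hmax ht'E
  rw [ht'def] at hle
  nlinarith [div_pos hm hσpos]

end aux

lemma sum_mulVec_le (M : Matrix (Fin n) (Fin n) ℝ) (hM : ∀ i j, 0 ≤ M i j)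
    (v : Fin n → ℝ) (hv : v ∈ stdSimplex ℝ (Fin n)) :
    ∑ i, (M *ᵥ v) i ≤ ∑ i, ∑ j, M i j := by
  have hcol : ∀ j, ∑ i, M i j ≤ ∑ i, ∑ j, M i j :=
    fun j => Finset.sum_le_sum fun i _ =>
      Finset.single_le_sum (fun j' (_ : j' ∈ Finset.univ) => hM i j') (Finset.mem_univ j)
  have h1 : ∑ i, (M *ᵥ v) i = ∑ j, (∑ i, M i j) * v j := by
    simp_rw [mulVec_apply']
    rw [Finset.sum_comm]
    simp_rw [Finset.sum_mul]
  rw [h1]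
  calc ∑ j, (∑ i, M i j) * v j ≤ ∑ j, (∑ i, ∑ j, M i j) * v j :=
      Finset.sum_le_sum fun j _ => mul_le_mul_of_nonneg_right (hcol j) (hv.1 j)
  _ = ∑ i, ∑ j, M i j := by rw [← Finset.mul_sum, hv.2, mul_one]

/-- Perron-Frobenius eigenvalue existence for nonnegative matrices with a
subinvariant vector. -/
lemma perron_nonneg (B : Matrix (Fin n) (Fin n) ℝ) (hB : ∀ i j, 0 ≤ B i j)
    (w : Fin n → ℝ) (hw0 : ∀ i, 0 ≤ w i) (hwne : w ≠ 0)
    (hsub : ∀ i, w i ≤ (B *ᵥ w) i) :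
    ∃ lam : ℝ, 1 ≤ lam ∧ ∃ v, v ≠ 0 ∧ B *ᵥ v = lam • v := by
  classical
  set J : Matrix (Fin n) (Fin n) ℝ := Matrix.of fun _ _ => (1 : ℝ) with hJdef
  set ε : ℕ → ℝ := fun m => (1 : ℝ) / (m + 1) with hεdef
  have hε : ∀ m, 0 < ε m := fun m => by positivity
  have hε1 : ∀ m, ε m ≤ 1 := fun m => by
    rw [hεdef]
    rw [div_le_one (by positivity)]
    push_cast; linarith
  set Bm : ℕ → Matrix (Fin n) (Fin n) ℝ := fun m => B + ε m • J with hBmdef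
  have hBmpos : ∀ m i j, 0 < Bm m i j := by
    intro m i j
    simp only [hBmdef, Matrix.add_apply, Matrix.smul_apply, hJdef, Matrix.of_apply,
      smul_eq_mul, mul_one]
    have := hB i j; have := hε m; linarith
  have hJw : ∀ i, 0 ≤ (J *ᵥ w) i :=
    mulVec_entry_nonneg J (fun i j => by simp [hJdef]) w hw0
  have hsubm : ∀ m i, w i ≤ (Bm m *ᵥ w) i := by
    intro m i
    rw [hBmdef, Matrix.add_mulVec, Matrix.smul_mulVec]
    have h1 : 0 ≤ (ε m • (J *ᵥ w)) i := by
      rw [Pi.smul_apply, smul_eq_mul]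
      exact mul_nonneg (hε m).le (hJw i)
    have := hsub i
    rw [Pi.add_apply]
    linarith
  choose lam hlam1 v hvΔ heig using fun m =>
    perron_pos (Bm m) (hBmpos m) w hw0 hwne (hsubm m)
  -- uniform bound on lam
  set C : ℝ := (∑ i, ∑ j, B i j) + n * n with hCdef
  have hlamC : ∀ m, lam m ≤ C := by
    intro m
    have h1 : ∑ i, (Bm m *ᵥ v m) i = lam m := by
      rw [heig m]
      simp only [Pi.smul_apply, smul_eq_mul, ← Finset.mul_sum]
      rw [(hvΔ m).2, mul_one]
    have h2 : ∑ i, ∑ j, Bm m i j ≤ C := by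
      rw [hCdef]
      have : ∀ i j, Bm m i j ≤ B i j + 1 := by
        intro i j
        simp only [hBmdef, Matrix.add_apply, Matrix.smul_apply, hJdef, Matrix.of_apply,
          smul_eq_mul, mul_one]
        linarith [hε1 m]
      calc ∑ i, ∑ j, Bm m i j ≤ ∑ i : Fin n, ∑ j : Fin n, (B i j + 1) :=
          Finset.sum_le_sum fun i _ => Finset.sum_le_sum fun j _ => this i j
      _ = (∑ i, ∑ j, B i j) + n * n := by
          simp [Finset.sum_add_distrib]
          try ring
    have h3 := sum_mulVec_le (Bm m) (fun i j => (hBmpos m i j).le) (v m) (hvΔ m)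
    linarith
  -- compactness: extract converging subsequences
  obtain ⟨vl, hvlΔ, φ, hφ, hvconv⟩ :=
    (isCompact_stdSimplex ℝ (Fin n)).tendsto_subseq (x := v) hvΔ
  obtain ⟨laml, hlaml, ψ, hψ, hlamconv⟩ :=
    (isCompact_Icc (a := (1:ℝ)) (b := C)).tendsto_subseq
      (x := fun m => lam (φ m)) (fun m => ⟨hlam1 _, hlamC _⟩)
  set θ : ℕ → ℕ := φ ∘ ψ with hθdef
  have hvconv' : Tendsto (fun m => v (θ m)) atTop (nhds vl) :=
    hvconv.comp hψ.tendsto_atTop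
  -- J *ᵥ v m = 1 for v in simplex
  have hJv : ∀ m, J *ᵥ v m = fun _ => (1 : ℝ) := by
    intro m
    funext i
    rw [mulVec_apply']
    simp only [hJdef, Matrix.of_apply, one_mul]
    exact (hvΔ m).2
  have heq : ∀ m, B *ᵥ v (θ m) + ε (θ m) • (fun _ => (1:ℝ)) = lam (θ m) • v (θ m) := by
    intro m
    have := heig (θ m)
    rw [hBmdef, Matrix.add_mulVec, Matrix.smul_mulVec, hJv (θ m)] at this
    exact this
  -- limits
  have hεθ : Tendsto (fun m => ε (θ m)) atTop (nhds 0) := by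
    have h0 : Tendsto ε atTop (nhds 0) := by
      rw [hεdef]
      exact tendsto_one_div_add_atTop_nhds_zero_nat
    exact h0.comp (hφ.comp hψ).tendsto_atTop
  have hLHS : Tendsto (fun m => B *ᵥ v (θ m) + ε (θ m) • (fun _ => (1:ℝ)))
      atTop (nhds (B *ᵥ vl)) := by
    have h1 : Tendsto (fun m => B *ᵥ v (θ m)) atTop (nhds (B *ᵥ vl)) :=
      ((continuous_mulVec B).tendsto vl).comp hvconv'
    have h2 : Tendsto (fun m => ε (θ m) • (fun _ => (1:ℝ) : Fin n → ℝ))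
        atTop (nhds ((0:ℝ) • (fun _ => (1:ℝ) : Fin n → ℝ))) :=
      hεθ.smul_const _
    rw [zero_smul] at h2
    have := h1.add h2
    rwa [add_zero] at this
  have hRHS : Tendsto (fun m => lam (θ m) • v (θ m)) atTop (nhds (laml • vl)) :=
    hlamconv.smul hvconv'
  have hfinal : B *ᵥ vl = laml • vl := by
    have : Tendsto (fun m => B *ᵥ v (θ m) + ε (θ m) • (fun _ => (1:ℝ)))
        atTop (nhds (laml • vl)) := by
      simp_rw [heq]
      exact hRHS
    exact tendsto_nhds_unique hLHS this
  refine ⟨laml, hlaml.1, vl, ?_, hfinal⟩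
  intro h0
  have := hvlΔ.2
  rw [h0] at this
  simp at this

/-- If `B` is nonnegative and admits no nonzero nonnegative subinvariant vector,
then `1 - B` has a nonnegative two-sided inverse (Neumann series). -/
lemma neumann_inverse (B : Matrix (Fin n) (Fin n) ℝ) (hB : ∀ i j, 0 ≤ B i j)
    (H : ∀ w : Fin n → ℝ, (∀ i, 0 ≤ w i) → w ≠ 0 → ¬ (∀ i, w i ≤ (B *ᵥ w) i)) :
    ∃ S : Matrix (Fin n) (Fin n) ℝ, (∀ i j, 0 ≤ S i j) ∧
      (1 - B) * S = 1 ∧ S * (1 - B) = 1 := by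
  classical
  set Sn : ℕ → Matrix (Fin n) (Fin n) ℝ := fun N => ∑ k ∈ Finset.range N, B ^ k with hSndef
  have hpow : ∀ k i j, 0 ≤ (B ^ k) i j := by
    intro k
    induction k with
    | zero => intro i j; by_cases h : i = j <;> simp [h, Matrix.one_apply]
    | succ k ih =>
      intro i j
      rw [pow_succ, Matrix.mul_apply]
      exact Finset.sum_nonneg fun l _ => mul_nonneg (ih i l) (hB l j)
  have hSnapp : ∀ N i j, Sn N i j = ∑ k ∈ Finset.range N, (B ^ k) i j := by
    intro N i j
    rw [hSndef]
    simp [Matrix.sum_apply]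
  have hSnn : ∀ N i j, 0 ≤ Sn N i j := by
    intro N i j
    rw [hSnapp]
    exact Finset.sum_nonneg fun k _ => hpow k i j
  have hmono : ∀ i j, Monotone fun N => Sn N i j := by
    intro i j N M hNM
    simp only
    rw [hSnapp, hSnapp]
    exact Finset.sum_le_sum_of_subset_of_nonneg
      (Finset.range_subset_range.mpr hNM) (fun k _ _ => hpow k i j)
  -- key recursion
  have hrec : ∀ N, B * Sn N = Sn N + B ^ N - 1 := by
    intro N
    have h1 : B * Sn N = ∑ k ∈ Finset.range N, B ^ (k + 1) := by
      rw [hSndef, Finset.mul_sum]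
      exact Finset.sum_congr rfl fun k _ => (pow_succ' B k).symm
    have h2 : ∑ k ∈ Finset.range (N + 1), B ^ k
        = (∑ k ∈ Finset.range N, B ^ (k + 1)) + B ^ 0 := Finset.sum_range_succ' _ N
    have h3 : Sn (N + 1) = Sn N + B ^ N := by
      rw [hSndef]; exact Finset.sum_range_succ _ N
    have h4 : Sn (N + 1) = (∑ k ∈ Finset.range N, B ^ (k + 1)) + 1 := by
      simp only [hSndef]
      rw [h2, pow_zero]
    rw [h1]
    have := h4.symm.trans h3
    -- (∑ ...) + 1 = Sn N + B ^ N
    linear_combination (norm := abel) this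
  have hcomm : ∀ N, Sn N * B = B * Sn N := by
    intro N
    rw [hSndef, Finset.sum_mul, Finset.mul_sum]
    exact Finset.sum_congr rfl fun k _ => ((pow_succ B k).symm.trans (pow_succ' B k))
  -- boundedness of entries
  have hbdd : ∀ i j, BddAbove (Set.range fun N => Sn N i j) := by
    intro i₁ j₀
    by_contra hnb
    have htop : Tendsto (fun N => Sn N i₁ j₀) atTop atTop :=
      tendsto_atTop_atTop_of_monotone' (hmono i₁ j₀) hnb
    set σ : ℕ → ℝ := fun N => ∑ i, Sn N i j₀ with hσdef
    have hσtop : Tendsto σ atTop atTop := by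
      apply tendsto_atTop_mono _ htop
      intro N
      exact Finset.single_le_sum (fun i _ => hSnn N i j₀) (Finset.mem_univ i₁)
    have hσ1 : ∀ N, (1:ℝ) ≤ σ (N + 1) := by
      intro N
      have h1 : (1:ℝ) ≤ Sn (N + 1) j₀ j₀ := by
        rw [hSnapp]
        calc (1:ℝ) = (B ^ 0) j₀ j₀ := by simp
        _ ≤ ∑ k ∈ Finset.range (N + 1), (B ^ k) j₀ j₀ :=
            Finset.single_le_sum (fun k _ => hpow k j₀ j₀) (by simp)
      exact le_trans h1 (Finset.single_le_sum (fun i _ => hSnn _ i j₀) (Finset.mem_univ j₀))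
    have hσpos : ∀ N, (0:ℝ) < σ (N + 1) := fun N => lt_of_lt_of_le one_pos (hσ1 N)
    set u : ℕ → (Fin n → ℝ) := fun N => (σ (N + 1))⁻¹ • (fun i => Sn (N + 1) i j₀) with hudef
    have huΔ : ∀ N, u N ∈ stdSimplex ℝ (Fin n) := by
      intro N
      refine ⟨fun i => mul_nonneg (inv_nonneg.mpr (hσpos N).le) (hSnn _ i j₀), ?_⟩
      simp only [hudef, Pi.smul_apply, smul_eq_mul, ← Finset.mul_sum]
      have he : ∑ i, Sn (N + 1) i j₀ = σ (N + 1) := rfl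
      rw [he, inv_mul_cancel₀ (hσpos N).ne']
    have hukey : ∀ N i, u N i - (σ (N + 1))⁻¹ ≤ (B *ᵥ u N) i := by
      intro N i
      have hcol : (B *ᵥ (fun i => Sn (N + 1) i j₀)) i = (B * Sn (N + 1)) i j₀ := by
        rw [mulVec_apply', Matrix.mul_apply]
      have h2 : (B * Sn (N + 1)) i j₀ = Sn (N + 1) i j₀ + (B ^ (N + 1)) i j₀
          - (1 : Matrix (Fin n) (Fin n) ℝ) i j₀ := by
        rw [hrec (N + 1)]
        simp [Matrix.sub_apply, Matrix.add_apply]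
      have hone : (1 : Matrix (Fin n) (Fin n) ℝ) i j₀ ≤ 1 := by
        by_cases h : i = j₀ <;> simp [h, Matrix.one_apply]
      have h3 : Sn (N + 1) i j₀ - 1 ≤ (B *ᵥ (fun i => Sn (N + 1) i j₀)) i := by
        rw [hcol, h2]
        have := hpow (N + 1) i j₀
        linarith
      have h4 : (B *ᵥ u N) i = (σ (N + 1))⁻¹ * (B *ᵥ (fun i => Sn (N + 1) i j₀)) i := by
        rw [hudef, Matrix.mulVec_smul]; rfl
      have h5 : u N i = (σ (N + 1))⁻¹ * Sn (N + 1) i j₀ := rfl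
      rw [h4, h5]
      have hinv : (0:ℝ) ≤ (σ (N + 1))⁻¹ := inv_nonneg.mpr (hσpos N).le
      have := mul_le_mul_of_nonneg_left h3 hinv
      rw [mul_sub, mul_one] at this
      linarith
    obtain ⟨w, hwΔ, φ, hφ, hwconv⟩ :=
      (isCompact_stdSimplex ℝ (Fin n)).tendsto_subseq (x := u) huΔ
    have hwsub : ∀ i, w i ≤ (B *ᵥ w) i := by
      intro i
      have h1 : Tendsto (fun N => u (φ N) i) atTop (nhds (w i)) :=
        (tendsto_pi_nhds.mp hwconv) i
      have h2 : Tendsto (fun N => (B *ᵥ u (φ N)) i) atTop (nhds ((B *ᵥ w) i)) :=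
        (tendsto_pi_nhds.mp (((continuous_mulVec B).tendsto w).comp hwconv)) i
      have h3 : Tendsto (fun N => (σ (φ N + 1))⁻¹) atTop (nhds 0) := by
        apply Tendsto.comp tendsto_inv_atTop_zero
        exact hσtop.comp (tendsto_atTop_mono (fun N => (hφ.id_le N).trans (Nat.le_succ _))
          tendsto_id)
      have h4 : Tendsto (fun N => u (φ N) i - (σ (φ N + 1))⁻¹) atTop (nhds (w i - 0)) :=
        h1.sub h3
      rw [sub_zero] at h4
      exact le_of_tendsto_of_tendsto' h4 h2 (fun N => hukey (φ N) i)
    have hwne : w ≠ 0 := by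
      intro h0
      have := hwΔ.2
      rw [h0] at this
      simp at this
    exact H w hwΔ.1 hwne hwsub
  -- limits of entries
  set S : Matrix (Fin n) (Fin n) ℝ := Matrix.of fun i j => ⨆ N, Sn N i j with hSdef
  have hconv : ∀ i j, Tendsto (fun N => Sn N i j) atTop (nhds (S i j)) :=
    fun i j => tendsto_atTop_ciSup (hmono i j) (hbdd i j)
  have hSnonneg : ∀ i j, 0 ≤ S i j := by
    intro i j
    exact le_trans (hSnn 0 i j) (le_ciSup (hbdd i j) 0)
  have hpowconv : ∀ i j, Tendsto (fun N => (B ^ N) i j) atTop (nhds 0) := by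
    intro i j
    have h1 : Tendsto (fun N => Sn (N + 1) i j) atTop (nhds (S i j)) :=
      (hconv i j).comp (tendsto_add_atTop_nat 1)
    have h2 : Tendsto (fun N => Sn (N + 1) i j - Sn N i j) atTop (nhds (S i j - S i j)) :=
      h1.sub (hconv i j)
    rw [sub_self] at h2
    convert h2 using 2 with N
    have h3 : Sn (N + 1) = Sn N + B ^ N := by
      rw [hSndef]; exact Finset.sum_range_succ _ N
    rw [h3]
    simp [Matrix.add_apply]
  -- identities
  have hId : ∀ N, (1 - B) * Sn N = 1 - B ^ N := by
    intro N
    rw [Matrix.sub_mul, Matrix.one_mul, hrec N]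
    abel
  have hId2 : ∀ N, Sn N * (1 - B) = 1 - B ^ N := by
    intro N
    rw [Matrix.mul_sub, Matrix.mul_one, hcomm N, hrec N]
    abel
  refine ⟨S, hSnonneg, ?_, ?_⟩
  · ext i j
    have h1 : Tendsto (fun N => ((1 - B) * Sn N) i j) atTop (nhds (((1 - B) * S) i j)) := by
      simp_rw [Matrix.mul_apply]
      exact tendsto_finset_sum _ fun k _ => (hconv k j).const_mul _
    have h2 : Tendsto (fun N => ((1 - B) * Sn N) i j) atTop
        (nhds ((1 : Matrix (Fin n) (Fin n) ℝ) i j)) := by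
      simp_rw [hId]
      have : Tendsto (fun N => (1 : Matrix (Fin n) (Fin n) ℝ) i j - (B ^ N) i j) atTop
          (nhds ((1 : Matrix (Fin n) (Fin n) ℝ) i j - 0)) :=
        tendsto_const_nhds.sub (hpowconv i j)
      rw [sub_zero] at this
      convert this using 2 with N
      rw [Matrix.sub_apply]
    exact tendsto_nhds_unique h1 h2
  · ext i j
    have h1 : Tendsto (fun N => (Sn N * (1 - B)) i j) atTop (nhds ((S * (1 - B)) i j)) := by
      simp_rw [Matrix.mul_apply]
      exact tendsto_finset_sum _ fun k _ => (hconv i k).mul_const _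
    have h2 : Tendsto (fun N => (Sn N * (1 - B)) i j) atTop
        (nhds ((1 : Matrix (Fin n) (Fin n) ℝ) i j)) := by
      simp_rw [hId2]
      have : Tendsto (fun N => (1 : Matrix (Fin n) (Fin n) ℝ) i j - (B ^ N) i j) atTop
          (nhds ((1 : Matrix (Fin n) (Fin n) ℝ) i j - 0)) :=
        tendsto_const_nhds.sub (hpowconv i j)
      rw [sub_zero] at this
      convert this using 2 with N
      rw [Matrix.sub_apply]
    exact tendsto_nhds_unique h1 h2


/-- error bound of Approximate-Centrality from the residual. -/
theorem approximate_centrality_error_bound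
    (n : ℕ) (A : Matrix (Fin n) (Fin n) ℝ)
    (hA : ∀ i j, 0 ≤ A i j)
    (α : ℝ) (hα : 0 ≤ α)
    (hρ : ENNReal.ofReal α * spectralRadius ℝ A < 1)
    (cr : (Fin n → ℝ) → (Fin n → ℝ))
    (hcr : ∀ x, cr x = x ᵥ* ((1 : Matrix (Fin n) (Fin n) ℝ) - α • A)⁻¹)
    (δ : ℝ) (hδ0 : 0 < δ) (hδ1 : δ ≤ 1)
    (s : Fin n → ℝ) (hs : ∀ i, 0 < s i)
    (r : Fin n → ℝ) (hr0 : ∀ i, 0 ≤ r i) (hrδ : ∀ i, r i ≤ δ * s i)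
    (tcr : Fin n → ℝ) (htcr : tcr = cr s - cr r) :
    ∀ u, cr s u ≥ tcr u ∧ tcr u ≥ (1 - δ) * cr s u := by
  classical
  have hBnn : ∀ i j, 0 ≤ (α • A) i j := fun i j => by
    rw [Matrix.smul_apply, smul_eq_mul]
    exact mul_nonneg hα (hA i j)
  have H : ∀ w : Fin n → ℝ, (∀ i, 0 ≤ w i) → w ≠ 0 →
      ¬ (∀ i, w i ≤ ((α • A) *ᵥ w) i) := by
    intro w hw0 hwne hsub
    have hα0 : α ≠ 0 := by
      intro h
      have hle : ∀ i, w i ≤ 0 := fun i => by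
        have := hsub i
        rw [h] at this
        simpa using this
      exact hwne (funext fun i => le_antisymm (hle i) (hw0 i))
    have hαpos : 0 < α := lt_of_le_of_ne hα (Ne.symm hα0)
    obtain ⟨lam, hlam1, v, hvne, heig⟩ := perron_nonneg (α • A) hBnn w hw0 hwne hsub
    have hAv : A *ᵥ v = (lam / α) • v := by
      have h1 : α • (A *ᵥ v) = lam • v := by
        rw [← Matrix.smul_mulVec]; exact heig
      calc A *ᵥ v = α⁻¹ • (α • (A *ᵥ v)) := by
            rw [smul_smul, inv_mul_cancel₀ hα0, one_smul]
      _ = α⁻¹ • (lam • v) := by rw [h1]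
      _ = (lam / α) • v := by rw [smul_smul]; congr 1; field_simp
    have hdet : ((lam / α) • (1 : Matrix (Fin n) (Fin n) ℝ) - A).det = 0 := by
      rw [← Matrix.exists_mulVec_eq_zero_iff]
      refine ⟨v, hvne, ?_⟩
      rw [Matrix.sub_mulVec, Matrix.smul_mulVec, Matrix.one_mulVec, hAv]
      simp
    have hmem : (lam / α) ∈ spectrum ℝ A := by
      rw [spectrum.mem_iff]
      intro hunit
      rw [Algebra.algebraMap_eq_smul_one] at hunit
      have := (Matrix.isUnit_iff_isUnit_det _).mp hunit
      rw [hdet] at this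
      exact (isUnit_iff_ne_zero.mp this) rfl
    have hrad : ENNReal.ofReal (lam / α) ≤ spectralRadius ℝ A := by
      have h1 : ‖(lam / α : ℝ)‖ₑ ≤ spectralRadius ℝ A := by
        rw [spectralRadius]
        exact le_iSup₂ (α := ℝ≥0∞) (lam / α) hmem
      rwa [Real.enorm_eq_ofReal (div_nonneg (le_trans one_pos.le hlam1) hα)] at h1
    have hge : (1 : ℝ≥0∞) ≤ ENNReal.ofReal α * spectralRadius ℝ A := by
      calc (1 : ℝ≥0∞) ≤ ENNReal.ofReal lam := by
            rw [ENNReal.one_le_ofReal]; exact hlam1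
      _ = ENNReal.ofReal (α * (lam / α)) := by congr 1; field_simp
      _ = ENNReal.ofReal α * ENNReal.ofReal (lam / α) := ENNReal.ofReal_mul hα
      _ ≤ ENNReal.ofReal α * spectralRadius ℝ A := mul_le_mul_right hrad _
    exact absurd hρ (not_lt.mpr hge)
  obtain ⟨S, hSnn, hl, -⟩ := neumann_inverse (α • A) hBnn H
  have hinv : ((1 : Matrix (Fin n) (Fin n) ℝ) - α • A)⁻¹ = S :=
    Matrix.inv_eq_right_inv hl
  intro u
  have hvecS : ∀ x : Fin n → ℝ, cr x u = ∑ i, x i * S i u := by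
    intro x
    rw [hcr x, hinv]
    simp [Matrix.vecMul, dotProduct]
  have h1 : 0 ≤ cr r u := by
    rw [hvecS]
    exact Finset.sum_nonneg fun i _ => mul_nonneg (hr0 i) (hSnn i u)
  have h2 : cr r u ≤ δ * cr s u := by
    rw [hvecS, hvecS, Finset.mul_sum]
    refine Finset.sum_le_sum fun i _ => ?_
    have ha := hrδ i
    have hb := hSnn i u
    nlinarith
  have htu : tcr u = cr s u - cr r u := by rw [htcr]; rfl
  constructor
  · rw [ge_iff_le, htu]; linarith
  · rw [ge_iff_le, htu]; nlinarith
end
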